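/- For any integers $d \geq 1$ and $h \geq 1$, there exists a $2^{-h}$-bracketing cover $\Delta$ of $[0,1)^d$ with $|\Delta| \leq \frac{1}{2}(2e)^d(2^{h+2}+1)^d$ such that for every $(v,w) \in \Delta$ and every coordinate $i \in \{1,\ldots,d\}$ one has $v_i = 2^{-(h+1+\lceil\log_2 d\rceil)} a_i$ and $w_i = 2^{-(h+2+\lceil\log_2 d\rceil)} b_i$ for some integers $a_i \in \{0,\ldots,2^{h+1+\lceil\log_2 d\rceil}\}$ and $b_i \in \{0,\ldots,2^{h+2+\lceil\log_2 d\rceil}\}$. -/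

import Mathlib

open MeasureTheory Set

/-- The anchored box `[0, v) = ∏ i, [0, v i)` in `ℝ^d`. -/
def anchoredBox {d : ℕ} (v : Fin d → ℝ) : Set (Fin d → ℝ) :=
  Set.pi Set.univ fun i => Set.Ico 0 (v i)

open Finset

/-- `Q m x = ∏_{k=1}^m (x+k)`. -/
noncomputable def Qb (m : ℕ) (x : ℝ) : ℝ := ∏ k ∈ Finset.range m, (x + (k + 1))

lemma Qb_zero (x : ℝ) : Qb 0 x = 1 := by simp [Qb]

lemma Qb_succ (m : ℕ) (x : ℝ) : Qb (m+1) x = Qb m x * (x + (m+1)) := by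
  unfold Qb
  rw [Finset.prod_range_succ]

lemma Qb_nonneg {m : ℕ} {x : ℝ} (hx : 0 ≤ x) : 0 ≤ Qb m x := by
  apply Finset.prod_nonneg
  intro k _
  positivity

/-- ratio lemma: for `0 ≤ y`, `y + 2 ≤ x`:
`Q m y * ((x+m−1)(x+m)) ≤ Q m x * (x(x−1))`. -/
lemma Qb_ratio {y x : ℝ} (hy : 0 ≤ y) (hx : y + 2 ≤ x) (m : ℕ) :
    Qb m y * ((x + m - 1) * (x + m)) ≤ Qb m x * (x * (x - 1)) := by
  induction m with
  | zero =>
    simp only [Qb_zero, Nat.cast_zero]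
    ring_nf
    exact le_rfl
  | succ m ih =>
    rw [Qb_succ, Qb_succ]
    have hQy := Qb_nonneg (m := m) hy
    have hm0 : (0:ℝ) ≤ (m:ℝ) := Nat.cast_nonneg m
    have hxm : (0:ℝ) ≤ x + m := by linarith
    have h3 : y + ((m:ℝ)+1) ≤ x + (m:ℝ) - 1 := by linarith
    have hc : Qb m y * (y + ((m:ℝ)+1)) * (x + (m:ℝ)) ≤ Qb m y * ((x + (m:ℝ) - 1) * (x + (m:ℝ))) := by
      calc Qb m y * (y + ((m:ℝ)+1)) * (x + (m:ℝ))
          = (Qb m y * (x + (m:ℝ))) * (y + ((m:ℝ)+1)) := by ring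
        _ ≤ (Qb m y * (x + (m:ℝ))) * (x + (m:ℝ) - 1) := by
            exact mul_le_mul_of_nonneg_left h3 (mul_nonneg hQy hxm)
        _ = Qb m y * ((x + (m:ℝ) - 1) * (x + (m:ℝ))) := by ring
    have h2 : Qb m y * (y + ((m:ℝ)+1)) * (x + (m:ℝ)) ≤ Qb m x * (x * (x - 1)) :=
      le_trans hc ih
    have hxM : (0:ℝ) ≤ x + ((m:ℝ)+1) := by linarith
    have key := mul_le_mul_of_nonneg_right h2 hxM
    push_cast
    nlinarith [key]

/-- step lemma: for `0 ≤ y`, `2 ≤ t`: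
`Q (m+1) (y+t) ≥ Q (m+1) y + (m+1) * Q m (y+t)`. -/
lemma Qb_step {y t : ℝ} (hy : 0 ≤ y) (ht : 2 ≤ t) (m : ℕ) :
    Qb (m+1) y + ((m:ℝ)+1) * Qb m (y+t) ≤ Qb (m+1) (y+t) := by
  set x := y + t with hxdef
  have hx : y + 2 ≤ x := by simp [hxdef]; linarith
  have hx2 : (2:ℝ) ≤ x := by linarith
  have hQy := Qb_nonneg (m := m) hy
  have hQx := Qb_nonneg (m := m) (show (0:ℝ) ≤ x by linarith)
  have hm0 : (0:ℝ) ≤ (m:ℝ) := Nat.cast_nonneg m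
  have hxm : (0:ℝ) < x + m := by linarith
  -- from ratio: Qb m y * (y+m+1) ≤ Qb m x * x
  have hmain : Qb m y * (y + ((m:ℝ)+1)) ≤ Qb m x * x := by
    have hr := Qb_ratio hy hx m
    -- Qb m y * (y+m+1) * (x+m) ≤ Qb m y * (x+m-1)*(x+m) ≤ Qb m x * x*(x-1) ≤ Qb m x * x * (x+m)
    have h3 : y + ((m:ℝ)+1) ≤ x + (m:ℝ) - 1 := by linarith
    have hc : Qb m y * (y + ((m:ℝ)+1)) * (x + (m:ℝ)) ≤ Qb m x * (x * (x-1)) := by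
      calc Qb m y * (y + ((m:ℝ)+1)) * (x + (m:ℝ))
          = (Qb m y * (x + (m:ℝ))) * (y + ((m:ℝ)+1)) := by ring
        _ ≤ (Qb m y * (x + (m:ℝ))) * (x + (m:ℝ) - 1) := by
            exact mul_le_mul_of_nonneg_left h3 (mul_nonneg hQy hxm.le)
        _ = Qb m y * ((x + (m:ℝ) - 1) * (x + (m:ℝ))) := by ring
        _ ≤ Qb m x * (x * (x-1)) := hr
    have hd : Qb m x * (x * (x-1)) ≤ (Qb m x * x) * (x + (m:ℝ)) := by
      nlinarith [mul_nonneg hQx (show (0:ℝ) ≤ x by linarith)]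
    have := le_trans hc hd
    -- divide by (x+m) > 0
    have := le_of_mul_le_mul_right this hxm
    linarith
  rw [Qb_succ, Qb_succ]
  nlinarith [hmain, hQx]

/-- sum lemma: for `2 ≤ t`, `(m+1) * Σ_{j=1}^N Q m (t*j) ≤ Q (m+1) (t*N)`. -/
lemma Qb_sum {t : ℝ} (ht : 2 ≤ t) (m N : ℕ) :
    ((m:ℝ)+1) * ∑ j ∈ Finset.range N, Qb m (t*(j+1)) ≤ Qb (m+1) (t*N) := by
  induction N with
  | zero =>
    simp only [Finset.range_zero, Finset.sum_empty, mul_zero, Nat.cast_zero, mul_zero]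
    exact Qb_nonneg le_rfl
  | succ N ih =>
    rw [Finset.sum_range_succ, mul_add]
    have hy : (0:ℝ) ≤ t * N := by positivity
    have hstep := Qb_step hy ht m
    push_cast
    rw [show t * ((N:ℝ)+1) = t * (N:ℝ) + t by ring]
    push_cast at ih
    linarith [hstep, ih]

/-! ### The recursive bracket construction -/

/-- resolution exponent at state `W`: minimal `e` with `2^e ≥ d·2^h·W`. -/
noncomputable def ee (d h : ℕ) (W : ℝ) : ℕ := Nat.clog 2 ⌈(d : ℝ) * 2^h * W⌉₊

lemma ee_ge (d h : ℕ) (W : ℝ) (hW : 0 ≤ W) :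
    (d : ℝ) * 2^h * W ≤ 2 ^ (ee d h W) := by
  calc (d : ℝ) * 2^h * W ≤ (⌈(d : ℝ) * 2^h * W⌉₊ : ℝ) := Nat.le_ceil _
    _ ≤ ((2 ^ (ee d h W) : ℕ) : ℝ) := by
        unfold ee
        exact Nat.cast_le.mpr (Nat.le_pow_clog one_lt_two _)
    _ = 2 ^ (ee d h W) := by push_cast; ring

lemma ee_le (d h : ℕ) (W : ℝ) (hW : 0 ≤ W) (hW1 : W ≤ 1) :
    ee d h W ≤ h + Nat.clog 2 d := by
  unfold ee
  rw [Nat.clog_le_iff_le_pow one_lt_two]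
  rw [Nat.ceil_le]
  push_cast
  calc (d : ℝ) * 2^h * W ≤ (d : ℝ) * 2^h * 1 := by
        apply mul_le_mul_of_nonneg_left hW1; positivity
    _ = (d : ℝ) * 2^h := by ring
    _ ≤ (2:ℝ) ^ (h + Nat.clog 2 d) := by
        rw [pow_add]
        calc (d : ℝ) * 2^h ≤ ((2:ℝ) ^ Nat.clog 2 d) * 2^h := by
              apply mul_le_mul_of_nonneg_right _ (by positivity)
              exact_mod_cast Nat.le_pow_clog one_lt_two d
          _ = 2^h * 2^ Nat.clog 2 d := by ring

lemma ee_min (d h : ℕ) (W : ℝ) (hW : 0 ≤ W) (he : 1 ≤ ee d h W) :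
    (2:ℝ) ^ (ee d h W) < (d : ℝ) * 2^(h+1) * W := by
  have h1 : 1 < ⌈(d : ℝ) * 2^h * W⌉₊ := by
    by_contra hc
    push_neg at hc
    have : Nat.clog 2 ⌈(d : ℝ) * 2^h * W⌉₊ = 0 := by
      interval_cases h' : ⌈(d : ℝ) * 2^h * W⌉₊ <;> simp [Nat.clog]
    simp [ee, this] at he
  have h2 : (2:ℕ) ^ (ee d h W - 1) < ⌈(d : ℝ) * 2^h * W⌉₊ := by
    have := Nat.pow_pred_clog_lt_self one_lt_two h1
    simpa [ee, Nat.pred_eq_sub_one] using this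
  have h3 : ((2:ℕ) ^ (ee d h W - 1) : ℝ) < (d : ℝ) * 2^h * W := by
    have hceil : (⌈(d : ℝ) * 2^h * W⌉₊ : ℝ) < (d : ℝ) * 2^h * W + 1 :=
      Nat.ceil_lt_add_one (by positivity)
    have h2' : ((2:ℕ) ^ (ee d h W - 1) : ℝ) + 1 ≤ (⌈(d : ℝ) * 2^h * W⌉₊ : ℝ) := by
      exact_mod_cast Nat.succ_le_of_lt h2
    linarith
  have h4 : (2:ℝ) ^ (ee d h W) = 2 * (2:ℝ) ^ (ee d h W - 1) := by
    rw [← pow_succ']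
    congr 1
    omega
  rw [h4]
  push_cast at h3
  calc 2 * (2:ℝ) ^ (ee d h W - 1) < 2 * ((d : ℝ) * 2^h * W) := by linarith
    _ = (d : ℝ) * 2^(h+1) * W := by rw [pow_succ]; ring

/-- recursive list of brackets: at state `W` (product of upper coordinates chosen so far),
for `m` remaining coordinates. -/
noncomputable def covL (d h : ℕ) : ℕ → ℝ → Finset (List (ℝ × ℝ))
  | 0, _ => {[]}
  | m+1, W =>
      (Finset.range (2 ^ ee d h W)).biUnion fun b =>
        (covL d h m (W * (((b:ℝ)+1) / 2 ^ ee d h W))).image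
          (List.cons ((b : ℝ) / 2 ^ ee d h W, ((b:ℝ)+1) / 2 ^ ee d h W))

lemma covL_succ (d h m : ℕ) (W : ℝ) :
    covL d h (m+1) W =
      (Finset.range (2 ^ ee d h W)).biUnion fun b =>
        (covL d h m (W * (((b:ℝ)+1) / 2 ^ ee d h W))).image
          (List.cons ((b : ℝ) / 2 ^ ee d h W, ((b:ℝ)+1) / 2 ^ ee d h W)) := rfl

lemma mem_covL_succ {d h m : ℕ} {W : ℝ} {l : List (ℝ × ℝ)} :
    l ∈ covL d h (m+1) W ↔
      ∃ b : ℕ, b < 2 ^ ee d h W ∧ ∃ l' ∈ covL d h m (W * (((b:ℝ)+1) / 2 ^ ee d h W)),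
        l = ((b : ℝ) / 2 ^ ee d h W, ((b:ℝ)+1) / 2 ^ ee d h W) :: l' := by
  rw [covL_succ]
  simp only [Finset.mem_biUnion, Finset.mem_range, Finset.mem_image]
  constructor
  · rintro ⟨b, hb, l', hl', rfl⟩
    exact ⟨b, hb, l', hl', rfl⟩
  · rintro ⟨b, hb, l', hl', rfl⟩
    exact ⟨b, hb, l', hl', rfl⟩

/-- every element of `covL` has the right length and dyadic entries. -/
lemma covL_entries (d h : ℕ) (hd : 1 ≤ d) :
    ∀ (m : ℕ) (W : ℝ), 0 < W → W ≤ 1 → ∀ l ∈ covL d h m W,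
      l.length = m ∧
      ∀ p ∈ l, ∃ e ≤ h + Nat.clog 2 d, ∃ b : ℕ, b < 2^e ∧
        p.1 = (b:ℝ) / 2^e ∧ p.2 = ((b:ℝ)+1) / 2^e := by
  intro m
  induction m with
  | zero =>
    intro W _ _ l hl
    simp [covL] at hl
    subst hl
    simp
  | succ m ih =>
    intro W hW hW1 l hl
    rw [mem_covL_succ] at hl
    obtain ⟨b, hb, l', hl', rfl⟩ := hl
    set e := ee d h W with hedef
    have he2 : (0:ℝ) < 2 ^ e := by positivity
    have hb1 : ((b:ℝ)+1) ≤ 2 ^ e := by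
      have : (b:ℝ) + 1 ≤ ((2:ℕ) ^ e : ℝ) := by exact_mod_cast Nat.succ_le_of_lt hb
      simpa using this
    have hW' : 0 < W * (((b:ℝ)+1) / 2 ^ e) := by positivity
    have hW'1 : W * (((b:ℝ)+1) / 2 ^ e) ≤ 1 := by
      have h1 : ((b:ℝ)+1) / 2 ^ e ≤ 1 := by
        rw [div_le_one he2]; exact hb1
      calc W * (((b:ℝ)+1) / 2 ^ e) ≤ W * 1 := by
            apply mul_le_mul_of_nonneg_left h1 hW.le
        _ = W := by ring
        _ ≤ 1 := hW1
    obtain ⟨hlen, hrep⟩ := ih _ hW' hW'1 l' hl'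
    refine ⟨by simp [hlen], ?_⟩
    intro p hp
    rcases List.mem_cons.mp hp with rfl | hp'
    · exact ⟨e, ee_le d h W hW.le hW1, b, hb, rfl, rfl⟩
    · exact hrep p hp'

lemma substate_mem {d h : ℕ} {W : ℝ} (hW : 0 < W) (hW1 : W ≤ 1) {b : ℕ}
    (hb : b < 2 ^ ee d h W) :
    0 < W * (((b:ℝ)+1) / 2 ^ ee d h W) ∧ W * (((b:ℝ)+1) / 2 ^ ee d h W) ≤ 1 := by
  set e := ee d h W
  have he2 : (0:ℝ) < 2 ^ e := by positivity
  have hb1 : ((b:ℝ)+1) ≤ 2 ^ e := by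
    have : ((b+1 : ℕ) : ℝ) ≤ ((2^e : ℕ) : ℝ) := by exact_mod_cast Nat.succ_le_of_lt hb
    push_cast at this
    linarith
  constructor
  · positivity
  · have h1 : ((b:ℝ)+1) / 2 ^ e ≤ 1 := by rw [div_le_one he2]; exact hb1
    calc W * (((b:ℝ)+1) / 2 ^ e) ≤ W * 1 := mul_le_mul_of_nonneg_left h1 hW.le
      _ = W := by ring
      _ ≤ 1 := hW1

lemma covL_card (d h : ℕ) (hd : 1 ≤ d) : ∀ (m : ℕ) (W : ℝ), 0 < W → W ≤ 1 →
    ((covL d h m W).card : ℝ) * (Nat.factorial m : ℝ) ≤ Qb m ((d:ℝ) * 2^(h+2) * W) := by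
  intro m
  induction m with
  | zero =>
    intro W hW hW1
    simp [covL, Qb_zero]
  | succ m ih =>
    intro W hW hW1
    have hcpos : (0:ℝ) < (d:ℝ) * 2^(h+2) * W := by
      have : (0:ℝ) < (d:ℝ) := by exact_mod_cast hd
      positivity
    set e := ee d h W with hedef
    have he2 : (0:ℝ) < 2 ^ e := by positivity
    -- card bounded by sum of cards
    have hcardN : (covL d h (m+1) W).card ≤
        ∑ b ∈ Finset.range (2^e), (covL d h m (W * (((b:ℝ)+1) / 2 ^ e))).card := by
      rw [covL_succ]
      exact le_trans (Finset.card_biUnion_le)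
        (Finset.sum_le_sum fun b _ => Finset.card_image_le)
    have hcard : ((covL d h (m+1) W).card : ℝ) ≤
        ∑ b ∈ Finset.range (2^e), ((covL d h m (W * (((b:ℝ)+1) / 2 ^ e))).card : ℝ) := by
      exact_mod_cast hcardN
    have hsum : ∑ b ∈ Finset.range (2^e), ((covL d h m (W * (((b:ℝ)+1) / 2 ^ e))).card : ℝ)
          * (Nat.factorial m : ℝ)
        ≤ ∑ b ∈ Finset.range (2^e), Qb m ((d:ℝ) * 2^(h+2) * (W * (((b:ℝ)+1) / 2 ^ e))) := by
      apply Finset.sum_le_sum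
      intro b hb
      have := substate_mem hW hW1 (Finset.mem_range.mp hb)
      exact ih _ this.1 this.2
    have hfact : (Nat.factorial (m+1) : ℝ) = (Nat.factorial m : ℝ) * ((m:ℝ)+1) := by
      rw [Nat.factorial_succ]; push_cast; ring
    have hmain : ((covL d h (m+1) W).card : ℝ) * (Nat.factorial (m+1) : ℝ)
        ≤ ((m:ℝ)+1) * ∑ b ∈ Finset.range (2^e),
            Qb m ((d:ℝ) * 2^(h+2) * (W * (((b:ℝ)+1) / 2 ^ e))) := by
      rw [hfact]
      calc ((covL d h (m+1) W).card : ℝ) * ((Nat.factorial m : ℝ) * ((m:ℝ)+1))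
          ≤ (∑ b ∈ Finset.range (2^e), ((covL d h m (W * (((b:ℝ)+1) / 2 ^ e))).card : ℝ))
            * ((Nat.factorial m : ℝ) * ((m:ℝ)+1)) := by
            apply mul_le_mul_of_nonneg_right hcard
            positivity
        _ = ((m:ℝ)+1) * ∑ b ∈ Finset.range (2^e),
              ((covL d h m (W * (((b:ℝ)+1) / 2 ^ e))).card : ℝ) * (Nat.factorial m : ℝ) := by
            rw [Finset.sum_mul]
            rw [Finset.mul_sum]
            apply Finset.sum_congr rfl
            intro b _
            ring
        _ ≤ ((m:ℝ)+1) * ∑ b ∈ Finset.range (2^e),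
              Qb m ((d:ℝ) * 2^(h+2) * (W * (((b:ℝ)+1) / 2 ^ e))) := by
            apply mul_le_mul_of_nonneg_left hsum
            positivity
    by_cases he : e = 0
    · -- single cell
      rw [he] at hmain
      simp only [pow_zero, Finset.range_one, Finset.sum_singleton, Nat.cast_zero] at hmain
      have harg : (d:ℝ) * 2^(h+2) * (W * (((0:ℝ)+1) / 1)) = (d:ℝ) * 2^(h+2) * W := by ring
      rw [harg] at hmain
      calc ((covL d h (m+1) W).card : ℝ) * (Nat.factorial (m+1) : ℝ)
          ≤ ((m:ℝ)+1) * Qb m ((d:ℝ) * 2^(h+2) * W) := hmain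
        _ ≤ Qb (m+1) ((d:ℝ) * 2^(h+2) * W) := by
            rw [Qb_succ]
            have hq := Qb_nonneg (m := m) hcpos.le
            nlinarith [hq, hcpos]
    · -- at least two cells : use the sum lemma with t = c W / 2^e ≥ 2
      have he1 : 1 ≤ e := Nat.one_le_iff_ne_zero.mpr he
      set t := (d:ℝ) * 2^(h+2) * W / 2^e with htdef
      have ht : 2 ≤ t := by
        have hmin := ee_min d h W hW.le (by rwa [← hedef])
        rw [← hedef] at hmin
        rw [htdef]
        rw [le_div_iff₀ he2]
        have : (d:ℝ) * 2^(h+2) * W = 2 * ((d:ℝ) * 2^(h+1) * W) := by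
          rw [pow_succ]; ring
        rw [this]
        linarith
      have hargs : ∀ b : ℕ, (d:ℝ) * 2^(h+2) * (W * (((b:ℝ)+1) / 2 ^ e)) = t * ((b:ℝ)+1) := by
        intro b
        rw [htdef]
        field_simp
      have hrw : ∑ b ∈ Finset.range (2^e),
            Qb m ((d:ℝ) * 2^(h+2) * (W * (((b:ℝ)+1) / 2 ^ e)))
          = ∑ b ∈ Finset.range (2^e), Qb m (t * ((b:ℝ)+1)) := by
        apply Finset.sum_congr rfl
        intro b _
        rw [hargs b]
      rw [hrw] at hmain
      have hQsum := Qb_sum ht m (2^e)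
      have hTN : t * ((2^e : ℕ) : ℝ) = (d:ℝ) * 2^(h+2) * W := by
        rw [htdef]
        push_cast
        field_simp
      rw [hTN] at hQsum
      linarith [hmain, hQsum]

lemma list_prod_mem_Icc (l : List ℝ) (h : ∀ a ∈ l, 0 ≤ a ∧ a ≤ 1) :
    0 ≤ l.prod ∧ l.prod ≤ 1 := by
  induction l with
  | nil => simp
  | cons a l ih =>
    obtain ⟨ha0, ha1⟩ := h a List.mem_cons_self
    have hl := ih (fun b hb => h b (List.mem_cons_of_mem a hb))
    rw [List.prod_cons]
    constructor
    · exact mul_nonneg ha0 hl.1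
    · nlinarith [hl.1, hl.2]

/-- per-entry bounds from the dyadic representation -/
lemma rep_bounds {p : ℝ × ℝ} {e b : ℕ} (hb : b < 2^e)
    (h1 : p.1 = (b:ℝ) / 2^e) (h2 : p.2 = ((b:ℝ)+1) / 2^e) :
    0 ≤ p.1 ∧ p.1 ≤ p.2 ∧ p.2 ≤ 1 := by
  have he2 : (0:ℝ) < 2 ^ e := by positivity
  have hb1 : ((b:ℝ)+1) ≤ 2 ^ e := by
    have : ((b+1 : ℕ) : ℝ) ≤ ((2^e : ℕ) : ℝ) := by exact_mod_cast Nat.succ_le_of_lt hb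
    push_cast at this
    linarith
  rw [h1, h2]
  refine ⟨by positivity, ?_, ?_⟩
  · rw [div_le_div_iff₀ he2 he2]; nlinarith
  · rw [div_le_one he2]; exact hb1

lemma covL_volume (d h : ℕ) (hd : 1 ≤ d) :
    ∀ (m : ℕ) (W : ℝ), 0 < W → W ≤ 1 → ∀ l ∈ covL d h m W,
      W * ((l.map Prod.snd).prod - (l.map Prod.fst).prod)
        ≤ (m : ℝ) / ((d:ℝ) * 2^h) := by
  intro m
  induction m with
  | zero =>
    intro W hW hW1 l hl
    simp [covL] at hl
    subst hl
    simp
  | succ m ih =>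
    intro W hW hW1 l hl
    rw [mem_covL_succ] at hl
    obtain ⟨b, hb, l', hl', rfl⟩ := hl
    set e := ee d h W with hedef
    have he2 : (0:ℝ) < 2 ^ e := by positivity
    have hdpos : (0:ℝ) < (d:ℝ) := by exact_mod_cast hd
    obtain ⟨hW', hW'1⟩ := substate_mem hW hW1 hb
    have hIH := ih _ hW' hW'1 l' hl'
    rw [← hedef] at hIH hW' hW'1
    -- bounds on the tail products
    obtain ⟨hlen', hrep'⟩ := covL_entries d h hd m _ hW' hW'1 l' hl'
    have hPv : 0 ≤ (l'.map Prod.fst).prod ∧ (l'.map Prod.fst).prod ≤ 1 := by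
      apply list_prod_mem_Icc
      intro a ha
      obtain ⟨p, hp, rfl⟩ := List.mem_map.mp ha
      obtain ⟨e', _, b', hb', h1, h2⟩ := hrep' p hp
      obtain ⟨g1, g2, g3⟩ := rep_bounds hb' h1 h2
      exact ⟨g1, le_trans g2 g3⟩
    -- mesh bound : W / 2^e ≤ 1/(d 2^h)
    have hge := ee_ge d h W hW.le
    rw [← hedef] at hge
    have hmesh : W * (1 / 2^e) ≤ 1 / ((d:ℝ) * 2^h) := by
      rw [mul_one_div, div_le_div_iff₀ he2 (by positivity)]
      nlinarith [hge]
    simp only [List.map_cons, List.prod_cons]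
    have hexp : W * (((b:ℝ)+1) / 2 ^ e * (l'.map Prod.snd).prod
          - (b:ℝ) / 2 ^ e * (l'.map Prod.fst).prod)
        = (W * (((b:ℝ)+1) / 2 ^ e)) * ((l'.map Prod.snd).prod - (l'.map Prod.fst).prod)
          + (W * (1 / 2^e)) * (l'.map Prod.fst).prod := by
      field_simp
      ring
    rw [hexp]
    have hterm2 : (W * (1 / 2^e)) * (l'.map Prod.fst).prod ≤ 1 / ((d:ℝ) * 2^h) := by
      calc (W * (1 / 2^e)) * (l'.map Prod.fst).prod ≤ (W * (1 / 2^e)) * 1 := by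
            apply mul_le_mul_of_nonneg_left hPv.2 (by positivity)
        _ = W * (1 / 2^e) := by ring
        _ ≤ 1 / ((d:ℝ) * 2^h) := hmesh
    have hcast : ((m+1 : ℕ) : ℝ) = (m:ℝ) + 1 := by push_cast; ring
    have hsum2 := add_le_add hIH hterm2
    rw [← add_div] at hsum2
    rw [hcast]
    exact hsum2

lemma covL_cover (d h : ℕ) :
    ∀ (m : ℕ) (W : ℝ), 0 < W → ∀ xs : List ℝ, xs.length = m →
      (∀ a ∈ xs, 0 ≤ a ∧ a < 1) →
      ∃ l ∈ covL d h m W, List.Forall₂ (fun (p : ℝ × ℝ) (a : ℝ) => p.1 ≤ a ∧ a < p.2) l xs := by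
  intro m
  induction m with
  | zero =>
    intro W hW xs hlen _
    rw [List.length_eq_zero_iff] at hlen
    subst hlen
    exact ⟨[], by simp [covL], List.Forall₂.nil⟩
  | succ m ih =>
    intro W hW xs hlen hxs
    rcases xs with _ | ⟨a, xs'⟩
    · simp at hlen
    obtain ⟨ha0, ha1⟩ := hxs a List.mem_cons_self
    set e := ee d h W with hedef
    have he2 : (0:ℝ) < 2 ^ e := by positivity
    set b := ⌊a * 2^e⌋₊ with hbdef
    have hblt : b < 2^e := by
      rw [hbdef, Nat.floor_lt (by positivity)]
      push_cast
      nlinarith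
    have hv : (b:ℝ) / 2^e ≤ a := by
      rw [div_le_iff₀ he2, hbdef]
      exact Nat.floor_le (by positivity)
    have hw : a < ((b:ℝ)+1) / 2^e := by
      rw [lt_div_iff₀ he2, hbdef]
      exact Nat.lt_floor_add_one (a * 2^e)
    have hW' : 0 < W * (((b:ℝ)+1) / 2 ^ e) := by positivity
    have hlen' : xs'.length = m := by simpa using hlen
    have hxs' : ∀ x ∈ xs', 0 ≤ x ∧ x < 1 := fun x hx => hxs x (List.mem_cons_of_mem a hx)
    obtain ⟨l', hl', hfa⟩ := ih _ hW' xs' hlen' hxs'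
    refine ⟨((b : ℝ) / 2 ^ e, ((b:ℝ)+1) / 2 ^ e) :: l', ?_, ?_⟩
    · rw [mem_covL_succ]
      exact ⟨b, hblt, l', hl', rfl⟩
    · exact List.Forall₂.cons ⟨hv, hw⟩ hfa

open MeasureTheory in
lemma volume_anchoredBox {n : ℕ} (u : Fin n → ℝ) (hu : ∀ i, 0 ≤ u i) :
    volume (anchoredBox u) = ENNReal.ofReal (∏ i, u i) := by
  rw [anchoredBox, MeasureTheory.volume_pi_pi]
  simp only [Real.volume_Ico, sub_zero]
  exact (ENNReal.ofReal_prod_of_nonneg (fun i _ => hu i)).symm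

open MeasureTheory in
lemma volume_anchoredBox_diff {n : ℕ} (v w : Fin n → ℝ) (hv : ∀ i, 0 ≤ v i)
    (hvw : ∀ i, v i ≤ w i) :
    volume (anchoredBox w \ anchoredBox v)
      = ENNReal.ofReal ((∏ i, w i) - ∏ i, v i) := by
  have hw : ∀ i, 0 ≤ w i := fun i => le_trans (hv i) (hvw i)
  have hsub : anchoredBox v ⊆ anchoredBox w := by
    intro y hy
    rw [anchoredBox, Set.mem_pi] at hy ⊢
    intro i hi
    have h := hy i hi
    rw [Set.mem_Ico] at h ⊢
    exact ⟨h.1, lt_of_lt_of_le h.2 (hvw i)⟩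
  have hmeas : MeasurableSet (anchoredBox v) :=
    MeasurableSet.pi Set.countable_univ (fun i _ => measurableSet_Ico)
  have hfin : volume (anchoredBox v) ≠ ⊤ := by
    rw [volume_anchoredBox v hv]; exact ENNReal.ofReal_ne_top
  rw [MeasureTheory.measure_diff hsub hmeas.nullMeasurableSet hfin,
    volume_anchoredBox v hv, volume_anchoredBox w hw]
  exact (ENNReal.ofReal_sub _ (Finset.prod_nonneg (fun i _ => hv i))).symm

lemma Qb_final (d h : ℕ) (hd : 1 ≤ d) :
    Qb d ((d:ℝ) * 2^(h+2)) ≤ (Nat.factorial d : ℝ) *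
      ((1/2) * (2 * Real.exp 1)^d * ((2:ℝ)^(h+2) + 1)^d) := by
  have hdR : (1:ℝ) ≤ (d:ℝ) := by exact_mod_cast hd
  have h1 : Qb d ((d:ℝ)*2^(h+2)) ≤ ((d:ℝ) * ((2:ℝ)^(h+2)+1))^d := by
    unfold Qb
    calc ∏ k ∈ Finset.range d, ((d:ℝ)*2^(h+2) + ((k:ℝ)+1))
        ≤ ∏ _k ∈ Finset.range d, ((d:ℝ)*((2:ℝ)^(h+2)+1)) := by
          apply Finset.prod_le_prod
          · intro k _; positivity
          · intro k hk
            have hkd : (k:ℝ)+1 ≤ (d:ℝ) := by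
              have := Finset.mem_range.mp hk
              exact_mod_cast Nat.succ_le_of_lt this
            nlinarith
      _ = ((d:ℝ)*((2:ℝ)^(h+2)+1))^d := by
          rw [Finset.prod_const, Finset.card_range]
  have h2 : ((d:ℝ))^d ≤ (Nat.factorial d : ℝ) * (Real.exp 1)^d := by
    have hsum := Real.sum_le_exp_of_nonneg (Nat.cast_nonneg d) (d+1)
    have hmem : d ∈ Finset.range (d+1) := Finset.mem_range.mpr (Nat.lt_succ_self d)
    have hterm : ((d:ℝ))^d / (Nat.factorial d : ℝ) ≤ Real.exp d := by
      refine le_trans (Finset.single_le_sum (f := fun i => ((d:ℝ))^i / (Nat.factorial i : ℝ))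
        (fun i _ => by positivity) hmem) hsum
    have hfac : (0:ℝ) < (Nat.factorial d : ℝ) := by
      exact_mod_cast Nat.factorial_pos d
    have hexp : Real.exp (d:ℝ) = (Real.exp 1)^d := by
      rw [← Real.exp_one_pow]
    rw [div_le_iff₀ hfac] at hterm
    rw [hexp] at hterm
    linarith [hterm]
  have h3 : ((d:ℝ) * ((2:ℝ)^(h+2)+1))^d = ((d:ℝ))^d * ((2:ℝ)^(h+2)+1)^d := by
    rw [mul_pow]
  have h4 : (2:ℝ)^d * (1/2) ≥ 1 := by
    have : (2:ℝ)^1 ≤ (2:ℝ)^d := by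
      apply pow_le_pow_right₀ (by norm_num) hd
    simp at this ⊢
    linarith
  have hA : (0:ℝ) ≤ ((2:ℝ)^(h+2)+1)^d := by positivity
  have hE : (0:ℝ) ≤ (Real.exp 1)^d := by positivity
  have hfac : (0:ℝ) < (Nat.factorial d : ℝ) := by exact_mod_cast Nat.factorial_pos d
  calc Qb d ((d:ℝ)*2^(h+2)) ≤ ((d:ℝ))^d * ((2:ℝ)^(h+2)+1)^d := by rw [← h3]; exact h1
    _ ≤ ((Nat.factorial d : ℝ) * (Real.exp 1)^d) * ((2:ℝ)^(h+2)+1)^d := by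
        exact mul_le_mul_of_nonneg_right h2 hA
    _ ≤ (Nat.factorial d : ℝ) * ((1/2) * (2 * Real.exp 1)^d * ((2:ℝ)^(h+2) + 1)^d) := by
        rw [mul_pow]
        have expand : (Nat.factorial d : ℝ) * ((1/2) * ((2:ℝ)^d * (Real.exp 1)^d) * ((2:ℝ)^(h+2) + 1)^d)
            = ((Nat.factorial d : ℝ) * (Real.exp 1)^d * ((2:ℝ)^(h+2)+1)^d) * ((2:ℝ)^d * (1/2)) := by
          ring
        rw [expand]
        nth_rewrite 1 [show ((Nat.factorial d : ℝ) * (Real.exp 1)^d) * ((2:ℝ)^(h+2)+1)^d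
          = (((Nat.factorial d : ℝ) * (Real.exp 1)^d) * ((2:ℝ)^(h+2)+1)^d) * 1 by ring]
        apply mul_le_mul_of_nonneg_left h4 (by positivity)

lemma prod_getD_eq {n : ℕ} (l : List (ℝ × ℝ)) (hlen : l.length = n) (f : ℝ × ℝ → ℝ) :
    ∏ i : Fin n, f (l.getD (i : ℕ) (0,0)) = (l.map f).prod := by
  have hmap : l.map f = List.ofFn (fun i : Fin n => f (l.getD (i : ℕ) (0,0))) := by
    apply List.ext_getElem
    · simp [hlen]
    · intro i h1 h2
      have hil : i < l.length := by simpa using h1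
      simp [List.getElem_map, List.getD_eq_getElem, hil]
  rw [hmap, List.prod_ofFn]

lemma dyadic_rescale {e E : ℕ} (heE : e ≤ E) (c : ℕ) :
    ((c : ℝ)) / 2^e = ((c * 2^(E - e) : ℕ) : ℝ) / 2^E := by
  push_cast
  rw [div_eq_div_iff (by positivity) (by positivity)]
  rw [mul_assoc, ← pow_add]
  congr 2
  omega


/-- For integers `d ≥ 1`, `h ≥ 1` there exists a `2^{-h}`-bracketing cover of `[0,1)^d`
of cardinality at most `(1/2)(2e)^d(2^{h+2}+1)^d` all of whose brackets have dyadic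
coordinates of the indicated resolutions. -/
theorem dyadic_bracketing_cover (d h : ℕ) (hd : 1 ≤ d) (hh : 1 ≤ h) :
    ∃ Δ : Finset ((Fin d → ℝ) × (Fin d → ℝ)),
      (∀ x ∈ Set.pi Set.univ fun _ : Fin d => Set.Ico (0:ℝ) 1,
        ∃ p ∈ Δ, p.1 ≤ x ∧ x ≤ p.2 ∧
          volume (anchoredBox p.2 \ anchoredBox p.1) ≤ ENNReal.ofReal ((2:ℝ)^(-(h:ℤ)))) ∧
      (Δ.card : ℝ) ≤ (1/2) * (2 * Real.exp 1)^d * ((2:ℝ)^(h+2) + 1)^d ∧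
      (∀ p ∈ Δ, ∀ i : Fin d,
        (∃ a : ℕ, a ≤ 2^(h + 1 + Nat.clog 2 d) ∧
          p.1 i = (a : ℝ) / 2^(h + 1 + Nat.clog 2 d)) ∧
        (∃ b : ℕ, b ≤ 2^(h + 2 + Nat.clog 2 d) ∧
          p.2 i = (b : ℝ) / 2^(h + 2 + Nat.clog 2 d))) := by
  classical
  set F : List (ℝ × ℝ) → (Fin d → ℝ) × (Fin d → ℝ) :=
    fun l => (fun i => (l.getD (i : ℕ) (0,0)).1, fun i => (l.getD (i : ℕ) (0,0)).2) with hF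
  refine ⟨(covL d h d 1).image F, ?_, ?_, ?_⟩
  · -- covering property
    intro x hx
    rw [Set.mem_univ_pi] at hx
    set xs : List ℝ := List.ofFn x with hxs
    have hlen : xs.length = d := by simp [hxs]
    have hxsm : ∀ a ∈ xs, 0 ≤ a ∧ a < 1 := by
      intro a ha
      obtain ⟨i, rfl⟩ := Set.mem_range.mp ((List.mem_ofFn' x a).mp (by simpa [hxs] using ha))
      have := hx i
      rw [Set.mem_Ico] at this
      exact this
    obtain ⟨l, hl, hfa⟩ := covL_cover d h d 1 one_pos xs hlen hxsm
    have hlenl : l.length = d := by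
      rw [List.Forall₂.length_eq hfa, hlen]
    have hget := (List.forall₂_iff_get.mp hfa).2
    have hpt : ∀ i : Fin d, (l.getD (i : ℕ) (0,0)).1 ≤ x i ∧ x i < (l.getD (i : ℕ) (0,0)).2 := by
      intro i
      have hil : (i : ℕ) < l.length := by rw [hlenl]; exact i.isLt
      have hixs : (i : ℕ) < xs.length := by rw [hlen]; exact i.isLt
      have h := hget (i : ℕ) hil hixs
      have hgd : l.getD (i : ℕ) (0,0) = l.get ⟨(i : ℕ), hil⟩ := by
        rw [List.getD_eq_getElem l (0,0) hil]
        simp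
      have hxg : xs.get ⟨(i : ℕ), hixs⟩ = x i := by
        simp [hxs]
      rw [hgd]
      rw [hxg] at h
      exact h
    -- entry bounds
    obtain ⟨_, hrep⟩ := covL_entries d h hd d 1 one_pos le_rfl l hl
    have hbd : ∀ p ∈ l, 0 ≤ p.1 ∧ p.1 ≤ p.2 ∧ p.2 ≤ 1 := by
      intro p hp
      obtain ⟨e', _, b', hb', h1, h2⟩ := hrep p hp
      exact rep_bounds hb' h1 h2
    have hmem_entry : ∀ i : Fin d, l.getD (i : ℕ) (0,0) ∈ l := by
      intro i
      have hil : (i : ℕ) < l.length := by rw [hlenl]; exact i.isLt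
      rw [List.getD_eq_getElem l (0,0) hil]
      exact List.getElem_mem hil
    refine ⟨F l, Finset.mem_image_of_mem F hl, ?_, ?_, ?_⟩
    · intro i
      exact (hpt i).1
    · intro i
      exact (hpt i).2.le
    · -- volume bound
      have hv0 : ∀ i, 0 ≤ (F l).1 i := fun i => (hbd _ (hmem_entry i)).1
      have hvw : ∀ i, (F l).1 i ≤ (F l).2 i := fun i => (hbd _ (hmem_entry i)).2.1
      rw [volume_anchoredBox_diff _ _ hv0 hvw]
      apply ENNReal.ofReal_le_ofReal
      have hprod1 : ∏ i : Fin d, (F l).1 i = (l.map Prod.fst).prod := prod_getD_eq l hlenl Prod.fst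
      have hprod2 : ∏ i : Fin d, (F l).2 i = (l.map Prod.snd).prod := prod_getD_eq l hlenl Prod.snd
      have hvol := covL_volume d h hd d 1 one_pos le_rfl l hl
      rw [one_mul] at hvol
      have hdpos : (0:ℝ) < (d:ℝ) := by exact_mod_cast hd
      have hfinal : ((d:ℝ)) / ((d:ℝ) * 2^h) = (2:ℝ)^(-(h:ℤ)) := by
        rw [zpow_neg, zpow_natCast]
        field_simp
      calc (∏ i : Fin d, (F l).2 i) - (∏ i : Fin d, (F l).1 i)
          = (l.map Prod.snd).prod - (l.map Prod.fst).prod := by rw [hprod1, hprod2]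
        _ ≤ ((d:ℝ)) / ((d:ℝ) * 2^h) := hvol
        _ = (2:ℝ)^(-(h:ℤ)) := hfinal
  · -- cardinality
    have hcard1 : ((covL d h d 1).image F).card ≤ (covL d h d 1).card := Finset.card_image_le
    have hcard2 := covL_card d h hd d 1 one_pos le_rfl
    rw [mul_one] at hcard2
    have hQ := Qb_final d h hd
    have hfac : (0:ℝ) < (Nat.factorial d : ℝ) := by exact_mod_cast Nat.factorial_pos d
    have hchain : (((covL d h d 1).image F).card : ℝ) * (Nat.factorial d : ℝ)
        ≤ ((1/2) * (2 * Real.exp 1)^d * ((2:ℝ)^(h+2) + 1)^d) * (Nat.factorial d : ℝ) := by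
      calc (((covL d h d 1).image F).card : ℝ) * (Nat.factorial d : ℝ)
          ≤ ((covL d h d 1).card : ℝ) * (Nat.factorial d : ℝ) := by
            apply mul_le_mul_of_nonneg_right _ hfac.le
            exact_mod_cast hcard1
        _ ≤ Qb d ((d:ℝ) * 2^(h+2)) := hcard2
        _ ≤ (Nat.factorial d : ℝ) * ((1/2) * (2 * Real.exp 1)^d * ((2:ℝ)^(h+2) + 1)^d) := hQ
        _ = ((1/2) * (2 * Real.exp 1)^d * ((2:ℝ)^(h+2) + 1)^d) * (Nat.factorial d : ℝ) := by ring
    exact le_of_mul_le_mul_right hchain hfac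
  · -- dyadic structure
    intro p hp i
    obtain ⟨l, hl, rfl⟩ := Finset.mem_image.mp hp
    obtain ⟨hlenl, hrep⟩ := covL_entries d h hd d 1 one_pos le_rfl l hl
    have hil : (i : ℕ) < l.length := by rw [hlenl]; exact i.isLt
    have hmem : l.getD (i : ℕ) (0,0) ∈ l := by
      rw [List.getD_eq_getElem l (0,0) hil]
      exact List.getElem_mem hil
    obtain ⟨e, he, b, hb, h1, h2⟩ := hrep _ hmem
    have heE : e ≤ h + 1 + Nat.clog 2 d := by omega
    have heE2 : e ≤ h + 2 + Nat.clog 2 d := by omega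
    constructor
    · refine ⟨b * 2^(h + 1 + Nat.clog 2 d - e), ?_, ?_⟩
      · have h2e : (2:ℕ)^e * 2^(h+1+Nat.clog 2 d - e) = 2^(h+1+Nat.clog 2 d) := by
          rw [← pow_add]; congr 1; omega
        have hmul := Nat.mul_le_mul_right (2^(h+1+Nat.clog 2 d - e)) (Nat.le_of_lt hb)
        omega
      · show (l.getD (i : ℕ) (0,0)).1 = _
        rw [h1, dyadic_rescale heE b]
    · refine ⟨(b+1) * 2^(h + 2 + Nat.clog 2 d - e), ?_, ?_⟩
      · have h2e : (2:ℕ)^e * 2^(h+2+Nat.clog 2 d - e) = 2^(h+2+Nat.clog 2 d) := by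
          rw [← pow_add]; congr 1; omega
        have hmul := Nat.mul_le_mul_right (2^(h+2+Nat.clog 2 d - e)) (show b + 1 ≤ 2^e by omega)
        omega
      · show (l.getD (i : ℕ) (0,0)).2 = _
        rw [h2]
        have hcast : ((b:ℝ)+1) = ((b+1 : ℕ) : ℝ) := by push_cast; ring
        rw [hcast, dyadic_rescale heE2 (b+1)]
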